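/- Let (g,h,φ) be a morphism Lie algebra, (V,W,ψ) a representation, and (θ,γ,η) a 3-cocycle. Then setting l₂(x,v) = ρ_V(x)v on g ⊗ V, l₂'(k,w) = ρ_W(k)w on h ⊗ W, the data (V →0 g, l₂, θ) and (W →0 h, l₂', γ) together with Φ = (φ, ψ, η) form a skeletal 2-term morphism sh Lie algebra. -/

import Mathlib

/-- The Chevalley–Eilenberg differential (on plain cochains), for a bracket `br` on `L`
and an action `ρ` of `L` on `M`:
`(δf)(x₁,…,x_{n+1}) = Σᵢ (-1)^{i+1} ρ(xᵢ) f(…,x̂ᵢ,…) + Σ_{i<j} (-1)^{i+j} f([xᵢ,xⱼ],…,x̂ᵢ,…,x̂ⱼ,…)`. -/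
def ceD {L M : Type*} [AddCommGroup M] (br : L → L → L) (ρ : L → M → M)
    {n : ℕ} (f : (Fin n → L) → M) : (Fin (n + 1) → L) → M :=
  fun x =>
    (∑ i : Fin (n + 1), ((-1 : ℤ) ^ (i : ℕ)) • ρ (x i) (f (x ∘ i.succAbove)))
      + ∑ i : Fin (n + 1), ∑ j : Fin (n + 1),
          if h : (i : ℕ) < (j : ℕ) then
            ((-1 : ℤ) ^ ((i : ℕ) + (j : ℕ))) • f (fun t : Fin n =>
              Fin.cons (α := fun _ => L) (br (x i) (x j))
                (fun s : Fin (n - 1) =>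
                  x (j.succAbove (Fin.cast (by have := j.isLt; omega)
                    (Fin.succAbove ⟨(i : ℕ), by have := j.isLt; omega⟩ s))))
                (Fin.cast (by have := j.isLt; omega) t))
          else 0

attribute [local instance 100] LieRing.ofAssociativeRing

private lemma ceD_two' {L M : Type*} [AddCommGroup M] (br : L → L → L) (ρ : L → M → M)
    (f : (Fin 2 → L) → M) (x : Fin 3 → L) :
    ceD br ρ f x =
      ρ (x 0) (f ![x 1, x 2]) - ρ (x 1) (f ![x 0, x 2]) + ρ (x 2) (f ![x 0, x 1])
        - f ![br (x 0) (x 1), x 2] + f ![br (x 0) (x 2), x 1] - f ![br (x 1) (x 2), x 0] := by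
  have e1 : (x ∘ Fin.succ) = ![x 1, x 2] := by funext t; fin_cases t <;> rfl
  have e2 : (x ∘ Fin.succAbove 1) = ![x 0, x 2] := by funext t; fin_cases t <;> rfl
  have e3 : (x ∘ Fin.succAbove 2) = ![x 0, x 1] := by funext t; fin_cases t <;> rfl
  have e4 : (fun t => Fin.cons (α := fun _ => L) (br (x 0) (x 1))
      (fun s : Fin 1 => x s.succ.succ) t) = ![br (x 0) (x 1), x 2] := by
    funext t; fin_cases t <;> rfl
  have e5 : (fun t => Fin.cons (α := fun _ => L) (br (x 0) (x 2))
      (fun s : Fin 1 => x (Fin.succAbove 2 s.succ)) t) = ![br (x 0) (x 2), x 1] := by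
    funext t; fin_cases t <;> rfl
  have e6 : (fun t => Fin.cons (α := fun _ => L) (br (x 1) (x 2))
      (fun s : Fin 1 => x (Fin.succAbove 2 (Fin.succAbove 1 s))) t) = ![br (x 1) (x 2), x 0] := by
    funext t; fin_cases t <;> rfl
  simp only [ceD, Fin.sum_univ_succ, Fin.sum_univ_zero]
  norm_num
  rw [e1, e2, e3, e4, e5, e6]
  abel

private lemma alt_swap' {k g W : Type*} [CommRing k] [AddCommGroup W] [Module k W]
    [AddCommGroup g] [Module k g]
    (η : AlternatingMap k g W (Fin 2)) (a b : g) : η ![a, b] = -η ![b, a] := by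
  have h := η.map_swap (v := ![b, a]) (i := 0) (j := 1) (by decide)
  have e : (![b, a] ∘ Equiv.swap (0 : Fin 2) 1) = ![a, b] := by
    funext t; fin_cases t <;> simp
  rw [e] at h; rw [h]

private lemma alt_neg_fst' {k g W : Type*} [CommRing k] [AddCommGroup W] [Module k W]
    [AddCommGroup g] [Module k g]
    (η : AlternatingMap k g W (Fin 2)) (a b : g) : η ![-a, b] = -η ![a, b] := by
  have e : (![-a, b]) = Function.update ![a, b] 0 (-a) := by
    funext t; fin_cases t <;> simp
  have e2 : (![a, b]) = Function.update ![a, b] 0 a := by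
    funext t; fin_cases t <;> simp
  rw [e, AlternatingMap.map_update_neg, ← e2]

/-- Let `(g,h,φ)` be a morphism Lie algebra, `(V,W,ψ)` a representation
and `(θ,γ,η)` a 3-cocycle of the morphism Lie algebra complex.  Then, setting
`l₂(x,v) = ρV(x)v` on `g ⊗ V` and `l₂'(z,w) = ρW(z)w` on `h ⊗ W`, the data
`(V →0 g, l₂, θ)` and `(W →0 h, l₂', γ)` together with `Φ = (φ, ψ, η)` form a skeletal
2-term morphism sh Lie algebra: the conclusions below are the skeletal sh Lie axioms
(Jacobi for the brackets, the action conditions, `θ` and `γ` are Chevalley–Eilenberg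
3-cocycles) and the homomorphism axioms (`φ` is a Lie algebra homomorphism, `ψ` is
equivariant, and the `φ₂`-coherence identity). -/
theorem statement17 {k g h V W : Type*} [CommRing k]
    [LieRing g] [LieAlgebra k g] [LieRing h] [LieAlgebra k h]
    [AddCommGroup V] [Module k V] [AddCommGroup W] [Module k W]
    (φ : g →ₗ⁅k⁆ h) (ρV : g →ₗ⁅k⁆ Module.End k V) (ρW : h →ₗ⁅k⁆ Module.End k W)
    (ψ : V →ₗ[k] W)
    (hψ : ∀ (x : g) (v : V), ψ (ρV x v) = ρW (φ x) (ψ v))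
    (θ : AlternatingMap k g V (Fin 3)) (γ : AlternatingMap k h W (Fin 3))
    (η : AlternatingMap k g W (Fin 2))
    -- the 3-cocycle conditions:
    (hθ : ceD (fun a b : g => ⁅a, b⁆) (fun x u => ρV x u) (⇑θ) = 0)
    (hγ : ceD (fun a b : h => ⁅a, b⁆) (fun z w => ρW z w) (⇑γ) = 0)
    (hη : (fun y : Fin 3 → g =>
        ψ (θ y) - γ (fun i => φ (y i))
          - ceD (fun a b : g => ⁅a, b⁆) (fun x w => ρW (φ x) w) (⇑η) y) = 0) :
    -- sh Lie axioms for (V →0 g, l₂, θ):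
    (∀ x y z : g, ⁅x, ⁅y, z⁆⁆ + ⁅y, ⁅z, x⁆⁆ + ⁅z, ⁅x, y⁆⁆ = 0) ∧
    (∀ (x y : g) (v : V), ρV ⁅x, y⁆ v = ρV x (ρV y v) - ρV y (ρV x v)) ∧
    ceD (fun a b : g => ⁅a, b⁆) (fun x u => ρV x u) (⇑θ) = 0 ∧
    -- sh Lie axioms for (W →0 h, l₂', γ):
    (∀ x y z : h, ⁅x, ⁅y, z⁆⁆ + ⁅y, ⁅z, x⁆⁆ + ⁅z, ⁅x, y⁆⁆ = 0) ∧
    (∀ (x y : h) (w : W), ρW ⁅x, y⁆ w = ρW x (ρW y w) - ρW y (ρW x w)) ∧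
    ceD (fun a b : h => ⁅a, b⁆) (fun z w => ρW z w) (⇑γ) = 0 ∧
    -- homomorphism axioms for Φ = (φ, ψ, η):
    (∀ x y : g, φ ⁅x, y⁆ = ⁅φ x, φ y⁆) ∧
    (∀ (x : g) (v : V), ψ (ρV x v) = ρW (φ x) (ψ v)) ∧
    (∀ x y z : g,
      ρW (φ x) (η ![y, z]) + ρW (φ y) (η ![z, x]) + ρW (φ z) (η ![x, y])
          + η ![x, ⁅y, z⁆] + η ![y, ⁅z, x⁆] + η ![z, ⁅x, y⁆]
        = ψ (θ ![x, y, z]) - γ ![φ x, φ y, φ z]) := by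

  refine ⟨lie_jacobi, ?_, hθ, lie_jacobi, ?_, hγ, fun x y => φ.map_lie x y, hψ, ?_⟩
  · intro x y v
    simp [LieHom.map_lie, Ring.lie_def, Module.End.mul_apply]
  · intro x y w
    simp [LieHom.map_lie, Ring.lie_def, Module.End.mul_apply]
  · intro x y z
    have H := congrFun hη ![x, y, z]
    simp only [Pi.zero_apply, sub_eq_zero] at H
    have eφ : (fun i => φ (![x, y, z] i)) = ![φ x, φ y, φ z] := by
      funext i; fin_cases i <;> simp
    rw [eφ, ceD_two'] at H
    simp only [Matrix.cons_val_zero, Matrix.cons_val_one, Matrix.head_cons,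
      Matrix.cons_val_two, Matrix.tail_cons] at H
    rw [alt_swap' η x z, alt_swap' η ⁅x, y⁆ z, alt_swap' η ⁅y, z⁆ x,
      show (⁅x, z⁆ : g) = -⁅z, x⁆ by rw [← lie_skew], alt_neg_fst' η ⁅z, x⁆ y,
      alt_swap' η ⁅z, x⁆ y] at H
    rw [H]
    simp only [map_neg, neg_neg]
    abel
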